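/- Let t ≠ 0 and b be complex numbers satisfying 3t b⁴ + 4b² = 16. Then for real z > |b| (with b real, t real, z² > b²), the derivative of h(z) = 2·ln((z + √(z² - b²))/b) - (z/8)(2tz² + tb² + 4)√(z² - b²) equals h'(z) = -(tz² + 1 + tb²/2)·√(z² - b²). -/

import Mathlib

/-- Derivative of the genus-zero `h`-function in the symmetric case: if
`3tb⁴ + 4b² = 16` then for real `z > |b|`,
`d/dz [2 ln((z+√(z²-b²))/b) - (z/8)(2tz²+tb²+4)√(z²-b²)]
  = -(tz² + 1 + tb²/2)√(z²-b²)`. -/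
theorem h_derivative_symmetric
    (t b : ℝ) (hmod : 3 * t * b ^ 4 + 4 * b ^ 2 = 16)
    (z : ℝ) (hz : |b| < z) :
    HasDerivAt (fun z : ℝ =>
        2 * Real.log ((z + Real.sqrt (z ^ 2 - b ^ 2)) / b) -
          (z / 8) * (2 * t * z ^ 2 + t * b ^ 2 + 4) * Real.sqrt (z ^ 2 - b ^ 2))
      (-(t * z ^ 2 + 1 + t * b ^ 2 / 2) * Real.sqrt (z ^ 2 - b ^ 2)) z := by
  have hb : b ≠ 0 := by
    intro h; rw [h] at hmod; norm_num at hmod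
  have hzpos : 0 < z := lt_of_le_of_lt (abs_nonneg b) hz
  have hlt : b ^ 2 < z ^ 2 := by nlinarith [sq_abs b, abs_nonneg b]
  set s := Real.sqrt (z ^ 2 - b ^ 2) with hsdef
  have hs2 : s ^ 2 = z ^ 2 - b ^ 2 := Real.sq_sqrt (by linarith)
  have hspos : 0 < s := Real.sqrt_pos.mpr (by linarith)
  have hinner : HasDerivAt (fun z : ℝ => z ^ 2 - b ^ 2) (2 * z) z := by
    simpa using (hasDerivAt_pow 2 z).sub_const (b ^ 2)
  have hds : HasDerivAt (fun z : ℝ => Real.sqrt (z ^ 2 - b ^ 2)) (2 * z / (2 * s)) z :=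
    hinner.sqrt (sub_pos.mpr hlt).ne'
  have hzs : 0 < z + s := by linarith
  have harg : (z + s) / b ≠ 0 := div_ne_zero (ne_of_gt hzs) hb
  have hlog : HasDerivAt (fun z : ℝ => 2 * Real.log ((z + Real.sqrt (z ^ 2 - b ^ 2)) / b))
      (2 * (((1 + 2 * z / (2 * s)) / b) / ((z + s) / b))) z := by
    exact ((((hasDerivAt_id z).add hds).div_const b).log harg).const_mul 2
  have hq : HasDerivAt (fun z : ℝ => 2 * t * z ^ 2 + t * b ^ 2 + 4) (2 * t * (2 * z)) z := by
    simpa [add_assoc] using (((hasDerivAt_pow 2 z).const_mul (2 * t)).add_const (t * b ^ 2 + 4))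
  have hpoly : HasDerivAt (fun z : ℝ => z / 8 * (2 * t * z ^ 2 + t * b ^ 2 + 4))
      (1 / 8 * (2 * t * z ^ 2 + t * b ^ 2 + 4) + z / 8 * (2 * t * (2 * z))) z := by
    simpa using ((hasDerivAt_id z).div_const 8).fun_mul hq
  have hp := hpoly.fun_mul hds
  have := hlog.fun_sub hp
  refine this.congr_deriv ?_
  symm
  have hsne := hspos.ne'
  rw [← hsdef]
  field_simp
  linear_combination ((z+s)*(-4*t*z^2-6*t*b^2-8)) * hs2 + (2*(z+s)) * hmod
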